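/- Let G be a bipartite graph on X ⊔ Y without isolated vertices. Then ind-match(G) = ord-match(G) = 2 if and only if the bipartite complement G^{bc} of G is a disjoint union of complete bipartite graphs H_1,...,H_s with s ≥ 2, at least two of which are not isolated vertices. -/

import Mathlib

/-- `a b : Fin r → V` describe a matching of size `r` in `G`:
the edges `aᵢbᵢ` are pairwise disjoint edges of `G`. -/
def IsMatchingPair {V : Type*} (G : SimpleGraph V) (r : ℕ) (a b : Fin r → V) : Prop :=
  (∀ i, G.Adj (a i) (b i)) ∧ Function.Injective a ∧ Function.Injective b ∧
    (∀ i j, a i ≠ b j)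

/-- An induced matching: a matching such that no two of its edges are joined by an edge. -/
def IsInducedMatchingPair {V : Type*} (G : SimpleGraph V) (r : ℕ) (a b : Fin r → V) : Prop :=
  IsMatchingPair G r a b ∧
    ∀ i j, i ≠ j → ¬ G.Adj (a i) (a j) ∧ ¬ G.Adj (a i) (b j) ∧ ¬ G.Adj (b i) (b j)

/-- An ordered matching: a matching `a₁b₁, …, a_r b_r` with `{a₁, …, a_r}` independent and
`aᵢbⱼ ∈ E(G) → i ≤ j`. -/
def IsOrderedMatchingPair {V : Type*} (G : SimpleGraph V) (r : ℕ) (a b : Fin r → V) : Prop :=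
  IsMatchingPair G r a b ∧ (∀ i j, ¬ G.Adj (a i) (a j)) ∧
    ∀ i j, G.Adj (a i) (b j) → i ≤ j

/-- The induced matching number. -/
noncomputable def indMatchNum {V : Type*} (G : SimpleGraph V) : ℕ :=
  sSup {r | ∃ a b : Fin r → V, IsInducedMatchingPair G r a b}

/-- The ordered matching number. -/
noncomputable def ordMatchNum {V : Type*} (G : SimpleGraph V) : ℕ :=
  sSup {r | ∃ a b : Fin r → V, IsOrderedMatchingPair G r a b}

/-- A graph on `X ⊕ Y` is bipartite with parts `X` and `Y`: every edge joins
a vertex of `X` with a vertex of `Y`. -/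
def IsBipartiteOn {X Y : Type*} (G : SimpleGraph (X ⊕ Y)) : Prop :=
  ∀ u v, G.Adj u v → (u.isLeft ∧ v.isRight) ∨ (u.isRight ∧ v.isLeft)

/-- `G` has no isolated vertices. -/
def NoIsolated {V : Type*} (G : SimpleGraph V) : Prop :=
  ∀ v, ∃ w, G.Adj v w

/-- `CSet G I` is the set of vertices of `Y` whose neighbourhood in `X` is exactly `I`. -/
def CSet {X Y : Type*} (G : SimpleGraph (X ⊕ Y)) (I : Set X) : Set Y :=
  {y | ∀ x, G.Adj (Sum.inl x) (Sum.inr y) ↔ x ∈ I}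

/-- `cNum G I` is the number of vertices of `Y` whose neighbourhood in `X` is exactly `I`. -/
noncomputable def cNum {X Y : Type*} (G : SimpleGraph (X ⊕ Y)) (I : Set X) : ℕ :=
  (CSet G I).ncard

/-- The bipartite complement of a bipartite graph on `X ⊕ Y`. -/
def bipComp {X Y : Type*} (G : SimpleGraph (X ⊕ Y)) : SimpleGraph (X ⊕ Y) where
  Adj u v := ((u.isLeft ∧ v.isRight) ∨ (u.isRight ∧ v.isLeft)) ∧ ¬ G.Adj u v
  symm := by
    constructor
    rintro u v ⟨h1, h2⟩
    exact ⟨by tauto, fun h => h2 h.symm⟩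
  loopless := by
    constructor
    rintro u ⟨h1, _⟩
    rcases u with x | y <;> simp_all

/-- A bipartite graph is a disjoint union of complete bipartite graphs iff whenever
`x ~ y`, `x' ~ y` and `x' ~ y'`, also `x ~ y'` (each connected component is a biclique). -/
def IsDisjUnionOfCompleteBipartite {X Y : Type*} (H : SimpleGraph (X ⊕ Y)) : Prop :=
  ∀ (x x' : X) (y y' : Y),
    H.Adj (Sum.inl x) (Sum.inr y) → H.Adj (Sum.inl x') (Sum.inr y) →
    H.Adj (Sum.inl x') (Sum.inr y') → H.Adj (Sum.inl x) (Sum.inr y')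

open Sum

namespace IndOrdAux

variable {X Y : Type*} {G : SimpleGraph (X ⊕ Y)}

lemma bipComp_adj_iff (G : SimpleGraph (X ⊕ Y)) (x : X) (y : Y) :
    (bipComp G).Adj (Sum.inl x) (Sum.inr y) ↔ ¬ G.Adj (Sum.inl x) (Sum.inr y) := by
  simp [bipComp]

lemma not_adj_ll (hbip : IsBipartiteOn G) (x x' : X) : ¬ G.Adj (Sum.inl x) (Sum.inl x') := by
  intro h
  rcases hbip _ _ h with ⟨h1, h2⟩ | ⟨h1, h2⟩ <;> simp_all

lemma not_adj_rr (hbip : IsBipartiteOn G) (y y' : Y) : ¬ G.Adj (Sum.inr y) (Sum.inr y') := by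
  intro h
  rcases hbip _ _ h with ⟨h1, h2⟩ | ⟨h1, h2⟩ <;> simp_all

lemma key (hc : IsDisjUnionOfCompleteBipartite (bipComp G)) (x x' : X) (y y' : Y)
    (h1 : ¬ G.Adj (inl x) (inr y)) (h2 : ¬ G.Adj (inl x') (inr y))
    (h3 : ¬ G.Adj (inl x') (inr y')) (h4 : G.Adj (inl x) (inr y')) : False :=
  (bipComp_adj_iff G x y').1
    (hc x x' y y' ((bipComp_adj_iff G x y).2 h1) ((bipComp_adj_iff G x' y).2 h2)
      ((bipComp_adj_iff G x' y').2 h3)) h4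

lemma no_ord3_aux (hbip : IsBipartiteOn G) (hc : IsDisjUnionOfCompleteBipartite (bipComp G))
    (v0 v1 v2 w0 w1 w2 : X ⊕ Y)
    (h0 : G.Adj v0 w0) (h1 : G.Adj v1 w1) (h2 : G.Adj v2 w2)
    (i01 : ¬ G.Adj v0 v1) (i02 : ¬ G.Adj v0 v2) (i12 : ¬ G.Adj v1 v2)
    (o10 : ¬ G.Adj v1 w0) (o20 : ¬ G.Adj v2 w0) (o21 : ¬ G.Adj v2 w1) : False := by
  rcases v0 with x0 | y0 <;> rcases w0 with x0' | y0' <;>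
    rcases v1 with x1 | y1 <;> rcases w1 with x1' | y1' <;>
    rcases v2 with x2 | y2 <;> rcases w2 with x2' | y2'
  all_goals first
    | exact not_adj_ll hbip _ _ h0 | exact not_adj_rr hbip _ _ h0
    | exact not_adj_ll hbip _ _ h1 | exact not_adj_rr hbip _ _ h1
    | exact not_adj_ll hbip _ _ h2 | exact not_adj_rr hbip _ _ h2
    | skip
  -- remaining 8 cases, in lexicographic order of (side v0, side v1, side v2) with L < R
  · -- LLL
    exact key hc x1 x2 y0' y1' o10 o20 o21 h1
  · -- LLR
    exact key hc x0 x1 y2 y0' i02 i12 o10 h0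
  · -- LRL
    exact key hc x0 x2 y1 y0' i01 (fun h => i12 h.symm) o20 h0
  · -- LRR
    exact key hc x1' x0 y2 y1 (fun h => o21 h.symm) i02 i01 h1.symm
  · -- RLL
    exact key hc x1 x2 y0 y1' (fun h => i01 h.symm) (fun h => i02 h.symm) o21 h1
  · -- RLR
    exact key hc x0' x1 y2 y0 (fun h => o20 h.symm) i12 (fun h => i01 h.symm) h0.symm
  · -- RRL
    exact key hc x0' x2 y1 y0 (fun h => o10 h.symm) (fun h => i12 h.symm)
      (fun h => i02 h.symm) h0.symm
  · -- RRR
    exact key hc x1' x0' y2 y1 (fun h => o21 h.symm) (fun h => o20 h.symm)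
      (fun h => o10 h.symm) h1.symm

lemma no_ord3 (hbip : IsBipartiteOn G) (hc : IsDisjUnionOfCompleteBipartite (bipComp G))
    (a b : Fin 3 → X ⊕ Y) (h : IsOrderedMatchingPair G 3 a b) : False := by
  obtain ⟨⟨hadj, -, -, -⟩, hind, hord⟩ := h
  have horn : ∀ i j : Fin 3, ¬ (i ≤ j) → ¬ G.Adj (a i) (b j) :=
    fun i j hij hadj' => hij (hord i j hadj')
  exact no_ord3_aux hbip hc (a 0) (a 1) (a 2) (b 0) (b 1) (b 2)
    (hadj 0) (hadj 1) (hadj 2) (hind 0 1) (hind 0 2) (hind 1 2)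
    (horn 1 0 (by decide)) (horn 2 0 (by decide)) (horn 2 1 (by decide))

end IndOrdAux

namespace IndOrdAux

variable {X Y : Type*} {G : SimpleGraph (X ⊕ Y)}

lemma walk_lemma (hc : IsDisjUnionOfCompleteBipartite (bipComp G)) :
    ∀ (n : ℕ) (x x' : X) (w : (bipComp G).Walk (Sum.inl x) (Sum.inl x')), w.length ≤ n →
    ∀ (y y' : Y), (bipComp G).Adj (Sum.inl x) (Sum.inr y) →
      (bipComp G).Adj (Sum.inl x') (Sum.inr y') → (bipComp G).Adj (Sum.inl x) (Sum.inr y') := by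
  intro n
  induction n with
  | zero =>
    intro x x' w hw y y' h1 h2
    cases w with
    | nil => exact h2
    | cons h p => simp at hw
  | succ n ih =>
    intro x x' w hw y y' h1 h2
    cases w with
    | nil => exact h2
    | cons h p =>
      rename_i v
      rcases v with xv | yv
      · exact absurd h (by simp [bipComp])
      · cases p with
        | cons h2' p2 =>
          rename_i v2
          rcases v2 with xv2 | yv2
          · have hlen : p2.length ≤ n := by
              simp [SimpleGraph.Walk.length_cons] at hw; omega
            have hrec := ih xv2 x' p2 hlen yv y' h2'.symm h2
            exact hc x xv2 yv y' h h2'.symm hrec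
          · exact absurd h2' (by simp [bipComp])

lemma reach_lemma (hc : IsDisjUnionOfCompleteBipartite (bipComp G)) (x x' : X) (y y' : Y)
    (h1 : (bipComp G).Adj (Sum.inl x) (Sum.inr y))
    (h2 : (bipComp G).Adj (Sum.inl x') (Sum.inr y'))
    (hr : (bipComp G).Reachable (Sum.inl x) (Sum.inl x')) :
    (bipComp G).Adj (Sum.inl x) (Sum.inr y') := by
  obtain ⟨w⟩ := hr
  exact walk_lemma hc w.length x x' w le_rfl y y' h1 h2

end IndOrdAux

namespace IndOrdAux

variable {X Y : Type*} {G : SimpleGraph (X ⊕ Y)}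

/-- From a size-2 induced matching, produce witnesses of two non-trivial components
of the bipartite complement. -/
lemma exists_wit (hbip : IsBipartiteOn G) (hc : IsDisjUnionOfCompleteBipartite (bipComp G))
    (v0 w0 v1 w1 : X ⊕ Y) (h0 : G.Adj v0 w0) (h1 : G.Adj v1 w1)
    (iaa : ¬ G.Adj v0 v1) (ibb : ¬ G.Adj w0 w1)
    (iab : ¬ G.Adj v0 w1) (iba : ¬ G.Adj v1 w0) :
    ∃ (x x' : X) (y y' : Y),
      (bipComp G).Adj (Sum.inl x) (Sum.inr y) ∧
      (bipComp G).Adj (Sum.inl x') (Sum.inr y') ∧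
      ¬ (bipComp G).Reachable (Sum.inl x) (Sum.inl x') := by
  rcases v0 with p | q <;> rcases w0 with p0 | q <;>
    rcases v1 with p' | q' <;> rcases w1 with p1 | q'
  all_goals first
    | exact absurd h0 (not_adj_ll hbip _ _) | exact absurd h0 (not_adj_rr hbip _ _)
    | exact absurd h1 (not_adj_ll hbip _ _) | exact absurd h1 (not_adj_rr hbip _ _)
    | skip
  · -- v0 = inl p, w0 = inr q, v1 = inl p', w1 = inr q'
    refine ⟨p, p', q', q, (bipComp_adj_iff G _ _).2 iab, (bipComp_adj_iff G _ _).2 iba, ?_⟩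
    intro hr
    exact (bipComp_adj_iff G p q).1
      (reach_lemma hc p p' q' q ((bipComp_adj_iff G _ _).2 iab)
        ((bipComp_adj_iff G _ _).2 iba) hr) h0
  · -- v0 = inl p, w0 = inr q, v1 = inr q', w1 = inl p1
    refine ⟨p, p1, q', q, (bipComp_adj_iff G _ _).2 iaa,
      (bipComp_adj_iff G _ _).2 (fun h => ibb h.symm), ?_⟩
    intro hr
    exact (bipComp_adj_iff G p q).1
      (reach_lemma hc p p1 q' q ((bipComp_adj_iff G _ _).2 iaa)
        ((bipComp_adj_iff G _ _).2 (fun h => ibb h.symm)) hr) h0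
  · -- v0 = inr q, w0 = inl p0, v1 = inl p', w1 = inr q'
    refine ⟨p', p0, q, q', (bipComp_adj_iff G _ _).2 (fun h => iaa h.symm),
      (bipComp_adj_iff G _ _).2 ibb, ?_⟩
    intro hr
    exact (bipComp_adj_iff G p' q').1
      (reach_lemma hc p' p0 q q' ((bipComp_adj_iff G _ _).2 (fun h => iaa h.symm))
        ((bipComp_adj_iff G _ _).2 ibb) hr) h1
  · -- v0 = inr q, w0 = inl p0, v1 = inr q', w1 = inl p1
    refine ⟨p1, p0, q, q', (bipComp_adj_iff G _ _).2 (fun h => iab h.symm),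
      (bipComp_adj_iff G _ _).2 (fun h => iba h.symm), ?_⟩
    intro hr
    exact (bipComp_adj_iff G p1 q').1
      (reach_lemma hc p1 p0 q q' ((bipComp_adj_iff G _ _).2 (fun h => iab h.symm))
        ((bipComp_adj_iff G _ _).2 (fun h => iba h.symm)) hr) h1.symm

lemma ind_to_ord {r : ℕ} {a b : Fin r → X ⊕ Y} (h : IsInducedMatchingPair G r a b) :
    IsOrderedMatchingPair G r a b := by
  obtain ⟨hm, h5⟩ := h
  refine ⟨hm, fun i j => ?_, fun i j hadj => ?_⟩
  · by_cases hij : i = j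
    · subst hij; exact fun h => G.irrefl h
    · exact (h5 i j hij).1
  · by_cases hij : i = j
    · exact hij.le
    · exact absurd hadj (h5 i j hij).2.1

lemma restrict_ord {r : ℕ} (hr : 3 ≤ r) {a b : Fin r → X ⊕ Y}
    (h : IsOrderedMatchingPair G r a b) :
    IsOrderedMatchingPair G 3 (a ∘ Fin.castLE hr) (b ∘ Fin.castLE hr) := by
  obtain ⟨⟨h1, h2, h3, h4⟩, h5, h6⟩ := h
  refine ⟨⟨fun i => h1 _, h2.comp (Fin.castLE_injective hr), h3.comp (Fin.castLE_injective hr),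
    fun i j => h4 _ _⟩, fun i j => h5 _ _, fun i j hadj => ?_⟩
  exact h6 _ _ hadj

end IndOrdAux

namespace IndOrdAux

variable {X Y : Type*} {G : SimpleGraph (X ⊕ Y)}

lemma ord3_of (hbip : IsBipartiteOn G) (x0 x1 x2 : X) (y0 y1 y2 : Y)
    (e0 : G.Adj (inl x0) (inr y0)) (e1 : G.Adj (inl x1) (inr y1))
    (e2 : G.Adj (inl x2) (inr y2))
    (n10 : ¬ G.Adj (inl x1) (inr y0)) (n20 : ¬ G.Adj (inl x2) (inr y0))
    (n21 : ¬ G.Adj (inl x2) (inr y1)) :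
    IsOrderedMatchingPair G 3 ![inl x0, inl x1, inl x2] ![inr y0, inr y1, inr y2] := by
  have dx01 : x0 ≠ x1 := fun h => n10 (by rw [← h]; exact e0)
  have dx02 : x0 ≠ x2 := fun h => n20 (by rw [← h]; exact e0)
  have dx12 : x1 ≠ x2 := fun h => n21 (by rw [← h]; exact e1)
  have dy01 : y0 ≠ y1 := fun h => n10 (by rw [h]; exact e1)
  have dy02 : y0 ≠ y2 := fun h => n20 (by rw [h]; exact e2)
  have dy12 : y1 ≠ y2 := fun h => n21 (by rw [h]; exact e2)
  refine ⟨⟨?_, ?_, ?_, ?_⟩, ?_, ?_⟩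
  · intro i; fin_cases i
    · exact e0
    · exact e1
    · exact e2
  · intro i j hij; fin_cases i <;> fin_cases j <;> simp_all
  · intro i j hij; fin_cases i <;> fin_cases j <;> simp_all
  · intro i j; fin_cases i <;> fin_cases j <;> simp
  · intro i j; fin_cases i <;> fin_cases j <;> exact not_adj_ll hbip _ _
  · intro i j h; fin_cases i <;> fin_cases j <;>
      first
        | decide
        | exact absurd h n10
        | exact absurd h n20
        | exact absurd h n21

lemma ind2_of (hbip : IsBipartiteOn G) (x0 x1 : X) (y0 y1 : Y)
    (e0 : G.Adj (inl x0) (inr y0)) (e1 : G.Adj (inl x1) (inr y1))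
    (n01 : ¬ G.Adj (inl x0) (inr y1)) (n10 : ¬ G.Adj (inl x1) (inr y0)) :
    IsInducedMatchingPair G 2 ![inl x0, inl x1] ![inr y0, inr y1] := by
  have dx01 : x0 ≠ x1 := fun h => n10 (by rw [← h]; exact e0)
  have dy01 : y0 ≠ y1 := fun h => n01 (by rw [← h]; exact e0)
  refine ⟨⟨?_, ?_, ?_, ?_⟩, ?_⟩
  · intro i; fin_cases i
    · exact e0
    · exact e1
  · intro i j hij; fin_cases i <;> fin_cases j <;> simp_all
  · intro i j hij; fin_cases i <;> fin_cases j <;> simp_all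
  · intro i j; fin_cases i <;> fin_cases j <;> simp
  · intro i j hij; fin_cases i <;> fin_cases j <;>
      first
        | exact absurd rfl hij
        | exact ⟨not_adj_ll hbip _ _, n01, not_adj_rr hbip _ _⟩
        | exact ⟨not_adj_ll hbip _ _, n10, not_adj_rr hbip _ _⟩

lemma zero_mem_ord : 0 ∈ {r | ∃ a b : Fin r → X ⊕ Y, IsOrderedMatchingPair G r a b} :=
  ⟨Fin.elim0, Fin.elim0, ⟨fun i => i.elim0, fun i => i.elim0, fun i => i.elim0,
    fun i => i.elim0⟩, fun i => i.elim0, fun i => i.elim0⟩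

lemma zero_mem_ind : 0 ∈ {r | ∃ a b : Fin r → X ⊕ Y, IsInducedMatchingPair G r a b} :=
  ⟨Fin.elim0, Fin.elim0, ⟨fun i => i.elim0, fun i => i.elim0, fun i => i.elim0,
    fun i => i.elim0⟩, fun i => i.elim0⟩

lemma bdd_ord [Fintype X] [Fintype Y] :
    BddAbove {r | ∃ a b : Fin r → X ⊕ Y, IsOrderedMatchingPair G r a b} := by
  refine ⟨Fintype.card (X ⊕ Y), ?_⟩
  rintro r ⟨a, b, ⟨-, ha, -, -⟩, -, -⟩
  simpa using Fintype.card_le_of_injective a ha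

lemma bdd_ind [Fintype X] [Fintype Y] :
    BddAbove {r | ∃ a b : Fin r → X ⊕ Y, IsInducedMatchingPair G r a b} := by
  refine ⟨Fintype.card (X ⊕ Y), ?_⟩
  rintro r ⟨a, b, ⟨-, ha, -, -⟩, -⟩
  simpa using Fintype.card_le_of_injective a ha

end IndOrdAux

/-- A bipartite graph `G` without isolated vertices has `ind-match(G) = ord-match(G) = 2`
iff its bipartite complement is a disjoint union of complete bipartite graphs at least two
of which are not isolated vertices (i.e. the complement has edges in at least two distinct
connected components). -/
theorem indMatch_eq_ordMatch_eq_two_iff_bipComp {X Y : Type*} [Fintype X] [Fintype Y]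
    (G : SimpleGraph (X ⊕ Y)) (hbip : IsBipartiteOn G) (hiso : NoIsolated G) :
    (indMatchNum G = 2 ∧ ordMatchNum G = 2) ↔
      (IsDisjUnionOfCompleteBipartite (bipComp G) ∧
        ∃ (x x' : X) (y y' : Y),
          (bipComp G).Adj (Sum.inl x) (Sum.inr y) ∧
          (bipComp G).Adj (Sum.inl x') (Sum.inr y') ∧
          ¬ (bipComp G).Reachable (Sum.inl x) (Sum.inl x')) := by
  open IndOrdAux Sum in
  constructor
  · rintro ⟨hI, hO⟩
    have hbddO := bdd_ord (G := G)
    have hbddI := bdd_ind (G := G)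
    have no3 : ∀ a b : Fin 3 → X ⊕ Y, ¬ IsOrderedMatchingPair G 3 a b := by
      intro a b h
      have h3 : (3 : ℕ) ∈ {r | ∃ a b : Fin r → X ⊕ Y, IsOrderedMatchingPair G r a b} :=
        ⟨a, b, h⟩
      have := le_csSup hbddO h3
      unfold ordMatchNum at hO
      omega
    have hc : IsDisjUnionOfCompleteBipartite (bipComp G) := by
      intro x x' y y' hxy hx'y hx'y'
      by_contra hne
      have gxy := (bipComp_adj_iff G x y).1 hxy
      have gx'y := (bipComp_adj_iff G x' y).1 hx'y
      have gx'y' := (bipComp_adj_iff G x' y').1 hx'y'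
      have gxy' : G.Adj (inl x) (inr y') := by
        by_contra h; exact hne ((bipComp_adj_iff G x y').2 h)
      have hx'' : ∃ x'' : X, G.Adj (inl x'') (inr y) := by
        obtain ⟨w, hw⟩ := hiso (Sum.inr y)
        rcases w with x'' | yy
        · exact ⟨x'', hw.symm⟩
        · exact absurd hw (not_adj_rr hbip _ _)
      obtain ⟨x'', hx''⟩ := hx''
      have hy'' : ∃ y'' : Y, G.Adj (inl x') (inr y'') := by
        obtain ⟨w, hw⟩ := hiso (Sum.inl x')
        rcases w with xx | y''
        · exact absurd hw (not_adj_ll hbip _ _)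
        · exact ⟨y'', hw⟩
      obtain ⟨y'', hy''⟩ := hy''
      exact no3 _ _ (ord3_of hbip x'' x x' y y' y'' hx'' gxy' hy'' gxy gx'y gx'y')
    refine ⟨hc, ?_⟩
    have mem2 : (2 : ℕ) ∈ {r | ∃ a b : Fin r → X ⊕ Y, IsInducedMatchingPair G r a b} := by
      have hmem := Nat.sSup_mem
        (s := {r | ∃ a b : Fin r → X ⊕ Y, IsInducedMatchingPair G r a b})
        ⟨0, zero_mem_ind⟩ hbddI
      unfold indMatchNum at hI
      rwa [hI] at hmem
    obtain ⟨a, b, ⟨⟨hadj, -, -, -⟩, hind⟩⟩ := mem2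
    exact exists_wit hbip hc (a 0) (b 0) (a 1) (b 1) (hadj 0) (hadj 1)
      (hind 0 1 (by decide)).1 (hind 0 1 (by decide)).2.2 (hind 0 1 (by decide)).2.1
      (hind 1 0 (by decide)).2.1
  · rintro ⟨hc, x, x', y, y', hxy, hx'y', hreach⟩
    have hxy' : G.Adj (inl x) (inr y') := by
      by_contra h
      exact hreach ⟨SimpleGraph.Walk.cons ((bipComp_adj_iff G x y').2 h)
        (SimpleGraph.Walk.cons hx'y'.symm SimpleGraph.Walk.nil)⟩
    have hx'y : G.Adj (inl x') (inr y) := by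
      by_contra h
      exact hreach ⟨SimpleGraph.Walk.cons hxy
        (SimpleGraph.Walk.cons ((bipComp_adj_iff G x' y).2 h).symm SimpleGraph.Walk.nil)⟩
    have hind2 := ind2_of hbip x x' y' y hxy' hx'y
      ((bipComp_adj_iff G x y).1 hxy) ((bipComp_adj_iff G x' y').1 hx'y')
    have hord2 := ind_to_ord hind2
    have hub : ∀ r ∈ {r | ∃ a b : Fin r → X ⊕ Y, IsOrderedMatchingPair G r a b}, r ≤ 2 := by
      rintro r ⟨a, b, h⟩
      by_contra hle
      push_neg at hle
      exact no_ord3 hbip hc _ _ (restrict_ord (by omega) h)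
    constructor
    · unfold indMatchNum
      refine le_antisymm (csSup_le ⟨0, zero_mem_ind⟩ ?_) (le_csSup bdd_ind ⟨_, _, hind2⟩)
      rintro r ⟨a, b, h⟩
      exact hub r ⟨a, b, ind_to_ord h⟩
    · unfold ordMatchNum
      exact le_antisymm (csSup_le ⟨0, zero_mem_ord⟩ hub) (le_csSup bdd_ord ⟨_, _, hord2⟩)
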